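/- If ν₁ and ν₂ are probability measures on ℝ with finite r-th absolute moments n_r = ∫ |x|^r ν₁(dx) and m_r = ∫ |x|^r ν₂(dx) for some r > 0, then ∫ |x|^r B[ν₁,ν₂](dx) ≤ 2^{max(r/2,1)} · ((n_r + m_r)/2) · ∫₀^{2π} |cos θ|^r dθ/(2π). -/

import Mathlib

open MeasureTheory Real
open scoped NNReal

/-- The uniform probability measure on `[0, 2π)`. -/
noncomputable def thetaUnif : Measure ℝ :=
  (ENNReal.ofReal (2 * π))⁻¹ • (volume.restrict (Set.Ico 0 (2 * π)))

/-- The Kac collision map: `B[ν₁,ν₂]` is the law of `X cos θ + Y sin θ`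
where `X ~ ν₁`, `Y ~ ν₂` and `θ` is uniform on `[0,2π)`, all independent. -/
noncomputable def collB (ν₁ ν₂ : Measure ℝ) : Measure ℝ :=
  Measure.map (fun p : ℝ × ℝ × ℝ => p.1 * Real.cos p.2.2 + p.2.1 * Real.sin p.2.2)
    (ν₁.prod (ν₂.prod thetaUnif))

instance : IsProbabilityMeasure thetaUnif := by
  constructor
  rw [thetaUnif, Measure.smul_apply, Measure.restrict_apply MeasurableSet.univ, Set.univ_inter,
    Real.volume_Ico, smul_eq_mul, sub_zero]
  exact ENNReal.inv_mul_cancel (ENNReal.ofReal_pos.mpr (by positivity)).ne' ENNReal.ofReal_ne_top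

/-- `(a^2)^(r/2) = |a|^r`. -/
lemma sq_rpow_half (r a : ℝ) : (a ^ 2) ^ (r / 2) = |a| ^ r := by
  rw [← sq_abs, ← Real.rpow_natCast |a| 2, ← Real.rpow_mul (abs_nonneg a)]
  norm_num
  rw [show (2:ℝ) * (r / 2) = r by ring]

/-- Splitting inequality with the sharp constant. -/
lemma split_rpow {s : ℝ} (hs : 0 < s) {a b : ℝ} (ha : 0 ≤ a) (hb : 0 ≤ b) :
    (a + b) ^ s ≤ 2 ^ (max s 1 - 1) * (a ^ s + b ^ s) := by
  rcases le_total s 1 with h1 | h1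
  · rw [max_eq_right h1, sub_self, Real.rpow_zero, one_mul]
    rw [← Real.coe_toNNReal a ha, ← Real.coe_toNNReal b hb, ← NNReal.coe_add,
      ← NNReal.coe_rpow, ← NNReal.coe_rpow, ← NNReal.coe_rpow, ← NNReal.coe_add,
      NNReal.coe_le_coe]
    exact NNReal.rpow_add_le_add_rpow _ _ hs.le h1
  · rw [max_eq_left h1]
    have key := NNReal.rpow_add_le_mul_rpow_add_rpow a.toNNReal b.toNNReal h1
    have key2 := (NNReal.coe_le_coe).2 key
    simp only [NNReal.coe_rpow, NNReal.coe_add, NNReal.coe_mul, NNReal.coe_ofNat] at key2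
    rwa [Real.coe_toNNReal a ha, Real.coe_toNNReal b hb] at key2

/-- Translation invariance of the `θ`-integral. -/
lemma rot_invariant (r φ : ℝ) :
    ∫ θ, |Real.cos (θ - φ)| ^ r ∂thetaUnif = ∫ θ, |Real.cos θ| ^ r ∂thetaUnif := by
  have hper : Function.Periodic (fun θ : ℝ => |Real.cos θ| ^ r) (2 * π) := fun x => by
    simp [Real.cos_add_two_pi]
  have h2π : (0 : ℝ) ≤ 2 * π := by positivity
  rw [thetaUnif]
  simp only [integral_smul_measure]
  congr 1
  have key : ∀ g : ℝ → ℝ, ∫ θ in Set.Ico 0 (2 * π), g θ = ∫ θ in (0 : ℝ)..(2 * π), g θ := by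
    intro g
    rw [intervalIntegral.integral_of_le h2π, integral_Ioc_eq_integral_Ioo,
      integral_Ico_eq_integral_Ioo]
  rw [key, key]
  calc ∫ θ in (0 : ℝ)..(2 * π), |Real.cos (θ - φ)| ^ r
      = ∫ θ in (0 - φ)..(2 * π - φ), |Real.cos θ| ^ r :=
        intervalIntegral.integral_comp_sub_right (fun t => |Real.cos t| ^ r) φ
    _ = ∫ θ in (0 : ℝ)..(2 * π), |Real.cos θ| ^ r := by
        rw [show (0 : ℝ) - φ = -φ by ring, show 2 * π - φ = -φ + 2 * π by ring]
        simpa using hper.intervalIntegral_add_eq (-φ) 0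

/-- Polar decomposition of a linear combination of `cos` and `sin`. -/
lemma polar_decomp (x y : ℝ) : ∃ R φ : ℝ, 0 ≤ R ∧ R ^ 2 = x ^ 2 + y ^ 2 ∧
    ∀ θ, x * Real.cos θ + y * Real.sin θ = R * Real.cos (θ - φ) := by
  rcases eq_or_ne (x ^ 2 + y ^ 2) 0 with h | h
  · have hx : x = 0 := by nlinarith [sq_nonneg x, sq_nonneg y]
    have hy : y = 0 := by nlinarith [sq_nonneg x, sq_nonneg y]
    exact ⟨0, 0, le_rfl, by simp [hx, hy], fun θ => by simp [hx, hy]⟩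
  · set z : ℂ := ⟨x, y⟩ with hz
    have hz0 : z ≠ 0 := by
      intro h0
      apply h
      have : x = 0 ∧ y = 0 := by
        constructor <;> [exact congrArg Complex.re h0; exact congrArg Complex.im h0]
      simp [this.1, this.2]
    have habs : ‖z‖ ≠ 0 := norm_ne_zero_iff.mpr hz0
    have hre : z.re = x := rfl
    have him : z.im = y := rfl
    refine ⟨‖z‖, Complex.arg z, norm_nonneg z, ?_, fun θ => ?_⟩
    · rw [Complex.sq_norm, Complex.normSq_apply, hre, him]
      ring
    · rw [Real.cos_sub, Complex.cos_arg hz0, Complex.sin_arg, hre, him]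
      field_simp

theorem collB_rth_moment (ν₁ ν₂ : Measure ℝ)
    [IsProbabilityMeasure ν₁] [IsProbabilityMeasure ν₂] (r : ℝ) (hr : 0 < r)
    (h₁ : Integrable (fun x : ℝ => |x| ^ r) ν₁) (h₂ : Integrable (fun x : ℝ => |x| ^ r) ν₂) :
    ∫ x, |x| ^ r ∂(collB ν₁ ν₂)
      ≤ 2 ^ (max (r / 2) 1) * (((∫ x, |x| ^ r ∂ν₁) + ∫ x, |x| ^ r ∂ν₂) / 2)
        * ∫ θ, |Real.cos θ| ^ r ∂thetaUnif := by
  set n := ∫ x, |x| ^ r ∂ν₁ with hn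
  set m := ∫ x, |x| ^ r ∂ν₂ with hm
  set I := ∫ θ, |Real.cos θ| ^ r ∂thetaUnif with hI
  have hI0 : 0 ≤ I := integral_nonneg fun θ => Real.rpow_nonneg (abs_nonneg _) r
  set C : ℝ := 2 ^ (max (r / 2) 1 - 1) with hC
  have hC0 : 0 ≤ C := Real.rpow_nonneg (by norm_num) _
  have hsplit : ∀ x y : ℝ, (x ^ 2 + y ^ 2) ^ (r / 2) ≤ C * (|x| ^ r + |y| ^ r) := by
    intro x y
    have := split_rpow (by positivity : (0:ℝ) < r / 2) (sq_nonneg x) (sq_nonneg y)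
    rwa [sq_rpow_half, sq_rpow_half] at this
  have hpt : ∀ x y θ : ℝ, |x * Real.cos θ + y * Real.sin θ| ^ r ≤ C * (|x| ^ r + |y| ^ r) := by
    intro x y θ
    refine le_trans ?_ (hsplit x y)
    rw [← sq_rpow_half r]
    apply Real.rpow_le_rpow (sq_nonneg _) ?_ (by positivity)
    nlinarith [Real.sin_sq_add_cos_sq θ, sq_nonneg (x * Real.sin θ - y * Real.cos θ)]
  have hcont : Continuous fun t : ℝ => |t| ^ r :=
    continuous_abs.rpow_const fun t => Or.inr hr.le
  have hmap : Continuous fun p : ℝ × ℝ × ℝ => p.1 * Real.cos p.2.2 + p.2.1 * Real.sin p.2.2 := by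
    fun_prop
  set F : ℝ × ℝ × ℝ → ℝ := fun p => |p.1 * Real.cos p.2.2 + p.2.1 * Real.sin p.2.2| ^ r with hF
  have hFcont : Continuous F := hcont.comp hmap
  have hF0 : ∀ p, 0 ≤ F p := fun p => Real.rpow_nonneg (abs_nonneg _) r
  have i2' : Integrable (fun q : ℝ × ℝ => |q.1| ^ r) (ν₂.prod thetaUnif) := by
    simpa using h₂.mul_prod (integrable_const (1 : ℝ))
  have i1 : Integrable (fun p : ℝ × ℝ × ℝ => |p.1| ^ r) (ν₁.prod (ν₂.prod thetaUnif)) := by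
    simpa using h₁.mul_prod
      (integrable_const (1 : ℝ) : Integrable (fun _ : ℝ × ℝ => (1 : ℝ)) (ν₂.prod thetaUnif))
  have i2 : Integrable (fun p : ℝ × ℝ × ℝ => |p.2.1| ^ r) (ν₁.prod (ν₂.prod thetaUnif)) := by
    simpa using
      (integrable_const (1 : ℝ) : Integrable (fun _ : ℝ => (1 : ℝ)) ν₁).mul_prod i2'
  have hFint : Integrable F (ν₁.prod (ν₂.prod thetaUnif)) := by
    refine (((i1.add i2).const_mul C).mono' hFcont.aestronglyMeasurable
      (ae_of_all _ fun p => ?_))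
    rw [Real.norm_eq_abs, abs_of_nonneg (hF0 p)]
    exact hpt p.1 p.2.1 p.2.2
  have inner_eq : ∀ x y : ℝ,
      ∫ θ, |x * Real.cos θ + y * Real.sin θ| ^ r ∂thetaUnif
        = (x ^ 2 + y ^ 2) ^ (r / 2) * I := by
    intro x y
    obtain ⟨R, φ, hR, hR2, hp⟩ := polar_decomp x y
    have hRr : R ^ r = (x ^ 2 + y ^ 2) ^ (r / 2) := by
      rw [← hR2, sq_rpow_half, abs_of_nonneg hR]
    calc ∫ θ, |x * Real.cos θ + y * Real.sin θ| ^ r ∂thetaUnif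
        = ∫ θ, R ^ r * |Real.cos (θ - φ)| ^ r ∂thetaUnif := by
          congr 1; funext θ
          rw [hp θ, abs_mul, abs_of_nonneg hR, Real.mul_rpow hR (abs_nonneg _)]
      _ = R ^ r * ∫ θ, |Real.cos (θ - φ)| ^ r ∂thetaUnif := integral_const_mul _ _
      _ = (x ^ 2 + y ^ 2) ^ (r / 2) * I := by rw [rot_invariant, hRr, hI]
  have int_sec : ∀ x : ℝ, Integrable (fun q : ℝ × ℝ => F (x, q)) (ν₂.prod thetaUnif) := by
    intro x
    refine (((integrable_const (|x| ^ r)).add i2').const_mul C).mono'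
      (hFcont.comp (Continuous.prodMk_right x)).aestronglyMeasurable (ae_of_all _ fun q => ?_)
    rw [Real.norm_eq_abs, abs_of_nonneg (hF0 _)]
    exact hpt x q.1 q.2
  have int_y : ∀ x : ℝ, Integrable (fun y => (x ^ 2 + y ^ 2) ^ (r / 2)) ν₂ := by
    intro x
    refine (((integrable_const (|x| ^ r)).add h₂).const_mul C).mono'
      (Continuous.aestronglyMeasurable ?_) (ae_of_all _ fun y => ?_)
    · exact (continuous_const.add (continuous_pow 2)).rpow_const fun y => Or.inr (by positivity)
    · rw [Real.norm_eq_abs, abs_of_nonneg (Real.rpow_nonneg (by positivity) _)]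
      exact hsplit x y
  have step1 : ∀ x : ℝ, ∫ q, F (x, q) ∂(ν₂.prod thetaUnif)
      = (∫ y, (x ^ 2 + y ^ 2) ^ (r / 2) ∂ν₂) * I := by
    intro x
    rw [MeasureTheory.integral_prod _ (int_sec x), ← integral_mul_const]
    refine integral_congr_ae (Filter.Eventually.of_forall fun y => ?_)
    exact inner_eq x y
  have bndx : ∀ x : ℝ, ∫ y, (x ^ 2 + y ^ 2) ^ (r / 2) ∂ν₂ ≤ C * (|x| ^ r + m) := by
    intro x
    have hint : Integrable (fun y : ℝ => C * (|x| ^ r + |y| ^ r)) ν₂ :=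
      ((integrable_const (|x| ^ r)).add h₂).const_mul C
    calc ∫ y, (x ^ 2 + y ^ 2) ^ (r / 2) ∂ν₂
        ≤ ∫ y, C * (|x| ^ r + |y| ^ r) ∂ν₂ := integral_mono (int_y x) hint (fun y => hsplit x y)
      _ = C * (|x| ^ r + m) := by
          rw [integral_const_mul, integral_add (integrable_const _) h₂, integral_const,
            probReal_univ, one_smul, ← hm]
  rw [collB, integral_map hmap.measurable.aemeasurable hcont.aestronglyMeasurable,
    MeasureTheory.integral_prod _ hFint]
  calc ∫ x, ∫ q, F (x, q) ∂(ν₂.prod thetaUnif) ∂ν₁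
      = ∫ x, (∫ y, (x ^ 2 + y ^ 2) ^ (r / 2) ∂ν₂) * I ∂ν₁ :=
        integral_congr_ae (Filter.Eventually.of_forall fun x => step1 x)
    _ ≤ ∫ x, C * (|x| ^ r + m) * I ∂ν₁ := by
        refine integral_mono_of_nonneg (Filter.Eventually.of_forall fun x => ?_)
          (((h₁.add (integrable_const m)).const_mul C).mul_const I)
          (Filter.Eventually.of_forall fun x => ?_)
        · exact mul_nonneg (integral_nonneg fun y => Real.rpow_nonneg (by positivity) _) hI0
        · exact mul_le_mul_of_nonneg_right (bndx x) hI0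
    _ = C * (n + m) * I := by
        rw [integral_mul_const, integral_const_mul, integral_add h₁ (integrable_const m),
          integral_const, probReal_univ, one_smul, ← hn]
    _ = 2 ^ max (r / 2) 1 * ((n + m) / 2) * I := by
        rw [hC, Real.rpow_sub (by norm_num : (0:ℝ) < 2), Real.rpow_one]
        ring
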